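/- (Theorem 3, case z = 1 and ω = 1.) For every j ∈ ℕ the family (P_C(m, j))_{m ∈ ℕ} is summable, and with W_j = ∑'_{m} P_C(m, j) one has W_0 = 1/(2 − φ₂), W_{i₀} = 2·i₀/(2 − φ₂), and for every integer k ≥ 2, W_{k·i₀} = 2·i₀·φ₂^{k−1}/((1 − s)(2 − φ₂)). -/

import Mathlib

/-- Player C's survival factor: 0 at the absorbing state 0, `1 - s` at the
multiple function barriers `k·i₀` with `k ≥ 2`, and 1 elsewhere (in particular
`cC s i₀ i₀ = 1`). -/
noncomputable def cC (s : ℝ) (i₀ : ℕ) (i : ℕ) : ℝ :=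
  if i = 0 then 0 else if i₀ ∣ i ∧ i ≠ i₀ then 1 - s else 1

/-- Player C's arrival probabilities: `PC p s i₀ m j` is the probability that
player C, starting at `i₀`, is at state `j` after `m` steps without absorption. -/
noncomputable def PC (p s : ℝ) (i₀ : ℕ) : ℕ → ℕ → ℝ
  | 0, j => if j = i₀ then 1 else 0
  | m + 1, 0 => (1 - p) * cC s i₀ 1 * PC p s i₀ m 1
  | m + 1, j + 1 =>
      p * cC s i₀ j * PC p s i₀ m j + (1 - p) * cC s i₀ (j + 2) * PC p s i₀ m (j + 2)

section
variable {s : ℝ} {i₀ : ℕ}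

lemma cC_zero : cC s i₀ 0 = 0 := by simp [cC]

lemma cC_nonneg (hs1 : s < 1) (i : ℕ) : 0 ≤ cC s i₀ i := by
  unfold cC; split_ifs <;> linarith

lemma cC_le_one (hs : 0 < s) (i : ℕ) : cC s i₀ i ≤ 1 := by
  unfold cC; split_ifs <;> linarith

lemma cC_ge (hs : 0 < s) {i : ℕ} (hi : i ≠ 0) : 1 - s ≤ cC s i₀ i := by
  unfold cC; split_ifs with h1 h2
  · exact absurd h1 hi
  · exact le_refl _
  · linarith

lemma cC_pos (hs1 : s < 1) {i : ℕ} (hi : i ≠ 0) : 0 < cC s i₀ i := by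
  unfold cC; split_ifs with h1 h2
  · exact absurd h1 hi
  · linarith
  · norm_num

lemma cC_i₀ (hi₀ : 2 ≤ i₀) : cC s i₀ i₀ = 1 := by
  unfold cC
  rw [if_neg (by omega), if_neg (by simp)]

lemma cC_of_not_dvd {i : ℕ} (hi : i ≠ 0) (h : ¬ i₀ ∣ i) : cC s i₀ i = 1 := by
  unfold cC
  rw [if_neg hi, if_neg (by tauto)]

lemma cC_barrier (hi₀ : 2 ≤ i₀) {k : ℕ} (hk : 2 ≤ k) : cC s i₀ (k * i₀) = 1 - s := by
  unfold cC
  rw [if_neg (by positivity), if_pos ⟨⟨k, mul_comm k i₀⟩, by nlinarith⟩]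

end

noncomputable def Yf (φ₂ : ℝ) (i₀ : ℕ) (j : ℕ) : ℝ :=
  if j ≤ i₀ then 2 / (2 - φ₂) * j
  else 2 / (2 - φ₂) * φ₂ ^ (j / i₀ - 1) * ((i₀ : ℝ) + (j % i₀ : ℕ) * (φ₂ - 1))

section
variable {φ₂ : ℝ} {i₀ : ℕ}

lemma Yf_zero : Yf φ₂ i₀ 0 = 0 := by simp [Yf]

lemma Yf_block (hi₀ : 2 ≤ i₀) {k r : ℕ} (hk : 1 ≤ k) (hr : r ≤ i₀) :
    Yf φ₂ i₀ (k * i₀ + r) = 2 / (2 - φ₂) * φ₂ ^ (k - 1) * ((i₀ : ℝ) + r * (φ₂ - 1)) := by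
  rcases eq_or_lt_of_le hr with hri | hri
  · -- r = i₀ : j = (k+1) * i₀
    have hj : k * i₀ + r = (k + 1) * i₀ := by rw [hri]; ring
    rw [hj]
    unfold Yf
    have hlt : i₀ < (k + 1) * i₀ := by nlinarith
    rw [if_neg (by omega), Nat.mul_div_cancel _ (by omega), Nat.mul_mod_left]
    have hpow : φ₂ ^ (k + 1 - 1) = φ₂ ^ (k - 1) * φ₂ := by
      have h : k + 1 - 1 = (k - 1) + 1 := by omega
      rw [h, pow_succ]
    rw [hpow, hri]
    push_cast
    ring
  · -- r < i₀
    by_cases hcase : k = 1 ∧ r = 0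
    · obtain ⟨hk1, hr0⟩ := hcase
      subst hk1; subst hr0
      unfold Yf
      rw [if_pos (by omega)]
      norm_num
    · have hgt : i₀ < k * i₀ + r := by
        rcases Nat.lt_or_ge k 2 with h2 | h2
        · have hk1 : k = 1 := by omega
          have : r ≠ 0 := fun h => hcase ⟨hk1, h⟩
          subst hk1; omega
        · have : 2 * i₀ ≤ k * i₀ := Nat.mul_le_mul_right _ h2
          omega
      have hdiv : (k * i₀ + r) / i₀ = k := by
        rw [show k * i₀ + r = r + i₀ * k by ring, Nat.add_mul_div_left _ _ (by omega : 0 < i₀),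
          Nat.div_eq_of_lt hri]
        omega
      have hmod : (k * i₀ + r) % i₀ = r := by
        rw [show k * i₀ + r = r + i₀ * k by ring, Nat.add_mul_mod_self_left,
          Nat.mod_eq_of_lt hri]
      unfold Yf
      rw [if_neg (by omega), hdiv, hmod]

end

section
variable {s φ₂ : ℝ} {i₀ : ℕ}

lemma Yf_le_branch {j : ℕ} (h : j ≤ i₀) : Yf φ₂ i₀ j = 2 / (2 - φ₂) * j := by
  unfold Yf; rw [if_pos h]

/-- The key harmonic/barrier equation satisfied by `Yf`. -/
lemma Yf_eq (hs : 0 < s) (hs1 : s < 1) (hi₀ : 2 ≤ i₀) (hφ0 : 0 < φ₂) (hφ1 : φ₂ < 1)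
    (hroot : φ₂ ^ 2 - (2 * ((i₀ : ℝ) / (1 - s) + 1 - (i₀ : ℝ))) * φ₂ + 1 = 0) (j : ℕ) :
    cC s i₀ (j + 1) * ((if j + 1 = i₀ then (1 : ℝ) else 0)
        + (Yf φ₂ i₀ j + Yf φ₂ i₀ (j + 2)) / 2)
      = Yf φ₂ i₀ (j + 1) := by
  have hs0 : (1 : ℝ) - s ≠ 0 := by linarith
  have h2φ : (2 : ℝ) - φ₂ ≠ 0 := by linarith
  have hroot' : (1 - s) * (φ₂ ^ 2 + 1) = (2 * ((i₀ : ℝ) + (1 - s) * (1 - (i₀ : ℝ)))) * φ₂ := by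
    have h := hroot
    field_simp at h
    linear_combination h
  rcases Nat.lt_or_ge (j + 1) i₀ with hlt | hge
  · -- interior of first block
    have hc : cC s i₀ (j + 1) = 1 := by
      apply cC_of_not_dvd (by omega)
      intro hdvd
      exact absurd (Nat.le_of_dvd (by omega) hdvd) (by omega)
    rw [hc, if_neg (by omega), Yf_le_branch (by omega : j ≤ i₀),
      Yf_le_branch (by omega : j + 2 ≤ i₀), Yf_le_branch (by omega : j + 1 ≤ i₀)]
    push_cast
    ring
  rcases Nat.eq_or_lt_of_le hge with heq | hgt
  · -- j + 1 = i₀ : the source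
    have hc : cC s i₀ (j + 1) = 1 := by rw [← heq]; exact cC_i₀ hi₀
    have hs2 : j + 2 = 1 * i₀ + 1 := by omega
    have hY2 : Yf φ₂ i₀ (j + 2) = 2 / (2 - φ₂) * φ₂ ^ (1 - 1) * ((i₀ : ℝ) + 1 * (φ₂ - 1)) := by
      rw [hs2]
      have := Yf_block (φ₂ := φ₂) hi₀ (k := 1) (r := 1) le_rfl (by omega)
      simpa using this
    rw [hc, if_pos heq.symm, Yf_le_branch (by omega : j ≤ i₀), hY2,
      Yf_le_branch (heq.ge : j + 1 ≤ i₀)]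
    have hcast : ((i₀ : ℝ)) = (j : ℝ) + 1 := by exact_mod_cast congrArg (Nat.cast (R := ℝ)) heq
    rw [pow_zero]
    field_simp
    push_cast
    nlinarith [hcast]
  -- j + 1 > i₀
  obtain ⟨q, r, hrlt, hdm⟩ : ∃ q r, r < i₀ ∧ i₀ * q + r = j + 1 :=
    ⟨(j + 1) / i₀, (j + 1) % i₀, Nat.mod_lt _ (by omega), Nat.div_add_mod _ _⟩
  have hq1 : 1 ≤ q := by
    by_contra h
    have h0 : q = 0 := by omega
    rw [h0] at hdm; omega
  rcases Nat.eq_zero_or_pos r with hr0 | hrpos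
  · -- barrier case : j + 1 = q * i₀ with q ≥ 2
    subst hr0
    have hq2 : 2 ≤ q := by
      by_contra h
      have h1 : q = 1 := by omega
      rw [h1] at hdm; omega
    obtain ⟨m, rfl⟩ : ∃ m, q = m + 2 := ⟨q - 2, by omega⟩
    have e1 : i₀ * (m + 2) = (m + 1) * i₀ + i₀ := by ring
    have e2 : i₀ * (m + 2) = (m + 2) * i₀ := by ring
    have hjeq : j = (m + 1) * i₀ + (i₀ - 1) := by omega
    have hj1 : j + 1 = (m + 2) * i₀ := by omega
    have hj2eq : j + 2 = (m + 2) * i₀ + 1 := by omega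
    have hYj : Yf φ₂ i₀ j
        = 2 / (2 - φ₂) * φ₂ ^ m * ((i₀ : ℝ) + ((i₀ - 1 : ℕ) : ℝ) * (φ₂ - 1)) := by
      rw [hjeq]
      have := Yf_block (φ₂ := φ₂) hi₀ (k := m + 1) (r := i₀ - 1) (by omega) (by omega)
      simpa using this
    have hYj1 : Yf φ₂ i₀ (j + 1) = 2 / (2 - φ₂) * φ₂ ^ (m + 1) * (i₀ : ℝ) := by
      rw [hj1]
      have := Yf_block (φ₂ := φ₂) hi₀ (k := m + 2) (r := 0) (by omega) (by omega)
      simpa using this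
    have hYj2 : Yf φ₂ i₀ (j + 2)
        = 2 / (2 - φ₂) * φ₂ ^ (m + 1) * ((i₀ : ℝ) + (φ₂ - 1)) := by
      rw [hj2eq]
      have := Yf_block (φ₂ := φ₂) hi₀ (k := m + 2) (r := 1) (by omega) (by omega)
      simpa using this
    have hc : cC s i₀ (j + 1) = 1 - s := by
      rw [hj1]; exact cC_barrier hi₀ (by omega)
    have hcast : ((i₀ - 1 : ℕ) : ℝ) = (i₀ : ℝ) - 1 := by
      have := Nat.cast_sub (by omega : 1 ≤ i₀) (R := ℝ)
      simpa using this
    rw [hc, if_neg (by omega), hYj, hYj1, hYj2, hcast]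
    linear_combination (φ₂ ^ m / (2 - φ₂)) * hroot'
  · -- interior of a later block
    obtain ⟨t, rfl⟩ : ∃ t, r = t + 1 := ⟨r - 1, by omega⟩
    have e : i₀ * q = q * i₀ := by ring
    have hjeq : j = q * i₀ + t := by omega
    have hj1 : j + 1 = q * i₀ + (t + 1) := by omega
    have hj2eq : j + 2 = q * i₀ + (t + 2) := by omega
    have hmod : (j + 1) % i₀ = t + 1 := by
      rw [← hdm, Nat.mul_add_mod, Nat.mod_eq_of_lt hrlt]
    have hc : cC s i₀ (j + 1) = 1 := by
      apply cC_of_not_dvd (by omega)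
      intro hdvd
      obtain ⟨c, hcc⟩ := hdvd
      rw [hcc, Nat.mul_mod_right] at hmod
      omega
    have hYj : Yf φ₂ i₀ j
        = 2 / (2 - φ₂) * φ₂ ^ (q - 1) * ((i₀ : ℝ) + (t : ℝ) * (φ₂ - 1)) := by
      rw [hjeq]
      have := Yf_block (φ₂ := φ₂) hi₀ (k := q) (r := t) hq1 (by omega)
      simpa using this
    have hYj1 : Yf φ₂ i₀ (j + 1)
        = 2 / (2 - φ₂) * φ₂ ^ (q - 1) * ((i₀ : ℝ) + ((t : ℝ) + 1) * (φ₂ - 1)) := by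
      rw [hj1]
      have := Yf_block (φ₂ := φ₂) hi₀ (k := q) (r := t + 1) hq1 (by omega)
      push_cast at this ⊢
      simpa using this
    have hYj2 : Yf φ₂ i₀ (j + 2)
        = 2 / (2 - φ₂) * φ₂ ^ (q - 1) * ((i₀ : ℝ) + ((t : ℝ) + 2) * (φ₂ - 1)) := by
      rw [hj2eq]
      have := Yf_block (φ₂ := φ₂) hi₀ (k := q) (r := t + 2) hq1 (by omega)
      push_cast at this ⊢
      simpa using this
    have hne : j + 1 ≠ i₀ := by omega
    rw [hc, if_neg hne, hYj, hYj1, hYj2]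
    ring

end

noncomputable def Wf (s φ₂ : ℝ) (i₀ : ℕ) (j : ℕ) : ℝ :=
  if j = 0 then 1 / (2 - φ₂) else Yf φ₂ i₀ j / cC s i₀ j

section
variable {s φ₂ : ℝ} {i₀ : ℕ}

lemma cC_mul_Wf (hs1 : s < 1) (j : ℕ) : cC s i₀ j * Wf s φ₂ i₀ j = Yf φ₂ i₀ j := by
  cases j with
  | zero => simp [Wf, cC_zero, Yf_zero]
  | succ n =>
    have hc : cC s i₀ (n + 1) ≠ 0 := ne_of_gt (cC_pos hs1 (by omega))
    simp only [Wf, if_neg (Nat.succ_ne_zero n)]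
    field_simp

lemma Wf_eq_succ (hs : 0 < s) (hs1 : s < 1) (hi₀ : 2 ≤ i₀) (hφ0 : 0 < φ₂) (hφ1 : φ₂ < 1)
    (hroot : φ₂ ^ 2 - (2 * ((i₀ : ℝ) / (1 - s) + 1 - (i₀ : ℝ))) * φ₂ + 1 = 0) (j : ℕ) :
    Wf s φ₂ i₀ (j + 1) = (if j + 1 = i₀ then (1 : ℝ) else 0)
      + 1 / 2 * (cC s i₀ j * Wf s φ₂ i₀ j)
      + 1 / 2 * (cC s i₀ (j + 2) * Wf s φ₂ i₀ (j + 2)) := by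
  have hc : 0 < cC s i₀ (j + 1) := cC_pos hs1 (by omega)
  have h := Yf_eq hs hs1 hi₀ hφ0 hφ1 hroot j
  rw [cC_mul_Wf hs1, cC_mul_Wf hs1]
  have hW : Wf s φ₂ i₀ (j + 1) = Yf φ₂ i₀ (j + 1) / cC s i₀ (j + 1) := by
    simp [Wf]
  rw [hW, ← h]
  field_simp
  ring

lemma Wf_eq_zero_case (hs1 : s < 1) (hi₀ : 2 ≤ i₀) (hφ1 : φ₂ < 1) :
    Wf s φ₂ i₀ 0 = 1 / 2 * (cC s i₀ 1 * Wf s φ₂ i₀ 1) := by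
  have h2φ : (0:ℝ) < 2 - φ₂ := by linarith
  rw [cC_mul_Wf hs1]
  have h1 : Yf φ₂ i₀ 1 = 2 / (2 - φ₂) * 1 := by
    have := Yf_le_branch (φ₂ := φ₂) (by omega : 1 ≤ i₀)
    simpa using this
  simp only [Wf, if_pos rfl, ↓reduceIte, h1]
  field_simp

lemma Yf_nonneg (hi₀ : 2 ≤ i₀) (hφ0 : 0 < φ₂) (hφ1 : φ₂ < 1) (j : ℕ) :
    0 ≤ Yf φ₂ i₀ j := by
  have h2φ : (0:ℝ) < 2 - φ₂ := by linarith
  unfold Yf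
  split_ifs with h
  · positivity
  · have hr : (j % i₀ : ℕ) < i₀ := Nat.mod_lt _ (by omega)
    have hcast : ((j % i₀ : ℕ) : ℝ) ≤ (i₀ : ℝ) := by exact_mod_cast hr.le
    have hcast0 : (0:ℝ) ≤ ((j % i₀ : ℕ) : ℝ) := by positivity
    have hX : 0 ≤ (i₀ : ℝ) + ((j % i₀ : ℕ) : ℝ) * (φ₂ - 1) := by nlinarith
    have ha : (0:ℝ) ≤ 2 / (2 - φ₂) := by positivity
    have hp : (0:ℝ) ≤ φ₂ ^ (j / i₀ - 1) := by positivity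
    exact mul_nonneg (mul_nonneg ha hp) hX

lemma Yf_le (hi₀ : 2 ≤ i₀) (hφ0 : 0 < φ₂) (hφ1 : φ₂ < 1) (j : ℕ) :
    Yf φ₂ i₀ j ≤ 2 / (2 - φ₂) * (i₀ : ℝ) := by
  have h2φ : (0:ℝ) < 2 - φ₂ := by linarith
  have ha : (0:ℝ) ≤ 2 / (2 - φ₂) := by positivity
  unfold Yf
  split_ifs with h
  · have : (j : ℝ) ≤ (i₀ : ℝ) := by exact_mod_cast h
    exact mul_le_mul_of_nonneg_left this ha
  · have hr : (j % i₀ : ℕ) < i₀ := Nat.mod_lt _ (by omega)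
    have hcast0 : (0:ℝ) ≤ ((j % i₀ : ℕ) : ℝ) := by positivity
    have hcast : ((j % i₀ : ℕ) : ℝ) ≤ (i₀ : ℝ) := by exact_mod_cast hr.le
    have hX0 : 0 ≤ (i₀ : ℝ) + ((j % i₀ : ℕ) : ℝ) * (φ₂ - 1) := by nlinarith
    have hX : (i₀ : ℝ) + ((j % i₀ : ℕ) : ℝ) * (φ₂ - 1) ≤ (i₀ : ℝ) := by nlinarith
    have hp1 : φ₂ ^ (j / i₀ - 1) ≤ 1 := pow_le_one₀ hφ0.le hφ1.le
    have hp0 : (0:ℝ) ≤ φ₂ ^ (j / i₀ - 1) := by positivity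
    calc 2 / (2 - φ₂) * φ₂ ^ (j / i₀ - 1) * ((i₀ : ℝ) + ((j % i₀ : ℕ) : ℝ) * (φ₂ - 1))
        ≤ 2 / (2 - φ₂) * 1 * (i₀ : ℝ) := by
          apply mul_le_mul (mul_le_mul le_rfl hp1 hp0 ha) hX hX0 (by positivity)
      _ = 2 / (2 - φ₂) * (i₀ : ℝ) := by ring

lemma Wf_nonneg (hs1 : s < 1) (hi₀ : 2 ≤ i₀) (hφ0 : 0 < φ₂) (hφ1 : φ₂ < 1) (j : ℕ) :
    0 ≤ Wf s φ₂ i₀ j := by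
  have h2φ : (0:ℝ) < 2 - φ₂ := by linarith
  unfold Wf
  split_ifs with h
  · positivity
  · exact div_nonneg (Yf_nonneg hi₀ hφ0 hφ1 j) (cC_pos hs1 h).le

lemma Wf_le (hs : 0 < s) (hs1 : s < 1) (hi₀ : 2 ≤ i₀) (hφ0 : 0 < φ₂) (hφ1 : φ₂ < 1) (j : ℕ) :
    Wf s φ₂ i₀ j ≤ 2 / (2 - φ₂) * (i₀ : ℝ) / (1 - s) := by
  have h2φ : (0:ℝ) < 2 - φ₂ := by linarith
  have h1s : (0:ℝ) < 1 - s := by linarith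
  have hI : (2:ℝ) ≤ (i₀ : ℝ) := by exact_mod_cast hi₀
  unfold Wf
  split_ifs with h
  · rw [div_le_div_iff₀ h2φ h1s]
    have : 2 / (2 - φ₂) * (2 - φ₂) = 2 := by field_simp
    rw [div_mul_eq_mul_div, div_mul_eq_mul_div, le_div_iff₀ h2φ]
    nlinarith
  · exact div_le_div₀ (by positivity) (Yf_le hi₀ hφ0 hφ1 j) h1s (cC_ge hs h)

lemma PC_nonneg (hs1 : s < 1) : ∀ (m j : ℕ), 0 ≤ PC (1/2) s i₀ m j := by
  intro m
  induction m with
  | zero =>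
    intro j
    simp only [PC]
    split_ifs <;> norm_num
  | succ m ih =>
    intro j
    cases j with
    | zero =>
      simp only [PC]
      have := cC_nonneg (i₀ := i₀) hs1 1
      have := ih 1
      nlinarith
    | succ n =>
      simp only [PC]
      have h1 := cC_nonneg (i₀ := i₀) hs1 n
      have h2 := cC_nonneg (i₀ := i₀) hs1 (n + 2)
      have h3 := ih n
      have h4 := ih (n + 2)
      nlinarith

lemma sum_PC_le (hs : 0 < s) (hs1 : s < 1) (hi₀ : 2 ≤ i₀) (hφ0 : 0 < φ₂) (hφ1 : φ₂ < 1)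
    (hroot : φ₂ ^ 2 - (2 * ((i₀ : ℝ) / (1 - s) + 1 - (i₀ : ℝ))) * φ₂ + 1 = 0) :
    ∀ (M j : ℕ), ∑ m ∈ Finset.range M, PC (1/2) s i₀ m j ≤ Wf s φ₂ i₀ j := by
  intro M
  induction M with
  | zero => intro j; simpa using Wf_nonneg hs1 hi₀ hφ0 hφ1 j
  | succ M ih =>
    intro j
    rw [Finset.sum_range_succ']
    cases j with
    | zero =>
      have hPC0 : PC (1/2) s i₀ 0 0 = 0 := by
        simp only [PC]
        rw [if_neg (by omega)]
      have hstep : ∀ m, PC (1/2) s i₀ (m + 1) 0 = (1/2) * cC s i₀ 1 * PC (1/2) s i₀ m 1 := by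
        intro m; simp only [PC]; norm_num
      rw [hPC0, add_zero]
      calc ∑ m ∈ Finset.range M, PC (1/2) s i₀ (m + 1) 0
          = (1/2) * cC s i₀ 1 * ∑ m ∈ Finset.range M, PC (1/2) s i₀ m 1 := by
            rw [Finset.mul_sum]; exact Finset.sum_congr rfl (fun m _ => hstep m)
        _ ≤ (1/2) * cC s i₀ 1 * Wf s φ₂ i₀ 1 := by
            apply mul_le_mul_of_nonneg_left (ih 1)
            have := cC_nonneg (i₀ := i₀) hs1 1
            linarith
        _ = Wf s φ₂ i₀ 0 := by rw [Wf_eq_zero_case hs1 hi₀ hφ1]; ring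
    | succ n =>
      have hPC0 : PC (1/2) s i₀ 0 (n + 1) = (if n + 1 = i₀ then (1:ℝ) else 0) := by
        simp only [PC]
      have hstep : ∀ m, PC (1/2) s i₀ (m + 1) (n + 1)
          = (1/2) * cC s i₀ n * PC (1/2) s i₀ m n
            + (1/2) * cC s i₀ (n + 2) * PC (1/2) s i₀ m (n + 2) := by
        intro m; simp only [PC]; norm_num
      rw [hPC0]
      have hsum : ∑ m ∈ Finset.range M, PC (1/2) s i₀ (m + 1) (n + 1)
          = (1/2) * cC s i₀ n * ∑ m ∈ Finset.range M, PC (1/2) s i₀ m n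
            + (1/2) * cC s i₀ (n + 2) * ∑ m ∈ Finset.range M, PC (1/2) s i₀ m (n + 2) := by
        rw [Finset.mul_sum, Finset.mul_sum, ← Finset.sum_add_distrib]
        exact Finset.sum_congr rfl (fun m _ => hstep m)
      rw [hsum, Wf_eq_succ hs hs1 hi₀ hφ0 hφ1 hroot n]
      have hc1 := cC_nonneg (i₀ := i₀) hs1 n
      have hc2 := cC_nonneg (i₀ := i₀) hs1 (n + 2)
      have h1 : (1/2) * cC s i₀ n * ∑ m ∈ Finset.range M, PC (1/2) s i₀ m n
          ≤ (1/2) * cC s i₀ n * Wf s φ₂ i₀ n := by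
        apply mul_le_mul_of_nonneg_left (ih n); linarith
      have h2 : (1/2) * cC s i₀ (n + 2) * ∑ m ∈ Finset.range M, PC (1/2) s i₀ m (n + 2)
          ≤ (1/2) * cC s i₀ (n + 2) * Wf s φ₂ i₀ (n + 2) := by
        apply mul_le_mul_of_nonneg_left (ih (n + 2)); linarith
      linarith

lemma PC_summable (hs : 0 < s) (hs1 : s < 1) (hi₀ : 2 ≤ i₀) (hφ0 : 0 < φ₂) (hφ1 : φ₂ < 1)
    (hroot : φ₂ ^ 2 - (2 * ((i₀ : ℝ) / (1 - s) + 1 - (i₀ : ℝ))) * φ₂ + 1 = 0) (j : ℕ) :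
    Summable (fun m : ℕ => PC (1/2) s i₀ m j) :=
  summable_of_sum_range_le (fun m => PC_nonneg hs1 m j)
    (fun M => sum_PC_le hs hs1 hi₀ hφ0 hφ1 hroot M j)

end

section
variable {s φ₂ : ℝ} {i₀ : ℕ}

lemma TW_zero (hs : 0 < s) (hs1 : s < 1) (hi₀ : 2 ≤ i₀) (hφ0 : 0 < φ₂) (hφ1 : φ₂ < 1)
    (hroot : φ₂ ^ 2 - (2 * ((i₀ : ℝ) / (1 - s) + 1 - (i₀ : ℝ))) * φ₂ + 1 = 0) :
    (∑' m : ℕ, PC (1/2) s i₀ m 0)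
      = 1 / 2 * cC s i₀ 1 * (∑' m : ℕ, PC (1/2) s i₀ m 1) := by
  rw [Summable.tsum_eq_zero_add (PC_summable hs hs1 hi₀ hφ0 hφ1 hroot 0)]
  have h0 : PC (1/2) s i₀ 0 0 = 0 := by
    simp only [PC]; rw [if_neg (by omega)]
  have hstep : ∀ m : ℕ, PC (1/2) s i₀ (m + 1) 0
      = 1 / 2 * cC s i₀ 1 * PC (1/2) s i₀ m 1 := by
    intro m; simp only [PC]; norm_num
  rw [h0, zero_add]
  calc (∑' m : ℕ, PC (1/2) s i₀ (m + 1) 0)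
      = ∑' m : ℕ, 1 / 2 * cC s i₀ 1 * PC (1/2) s i₀ m 1 := tsum_congr hstep
    _ = 1 / 2 * cC s i₀ 1 * (∑' m : ℕ, PC (1/2) s i₀ m 1) := tsum_mul_left

lemma TW_succ (hs : 0 < s) (hs1 : s < 1) (hi₀ : 2 ≤ i₀) (hφ0 : 0 < φ₂) (hφ1 : φ₂ < 1)
    (hroot : φ₂ ^ 2 - (2 * ((i₀ : ℝ) / (1 - s) + 1 - (i₀ : ℝ))) * φ₂ + 1 = 0) (j : ℕ) :
    (∑' m : ℕ, PC (1/2) s i₀ m (j + 1))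
      = (if j + 1 = i₀ then (1:ℝ) else 0)
        + 1 / 2 * cC s i₀ j * (∑' m : ℕ, PC (1/2) s i₀ m j)
        + 1 / 2 * cC s i₀ (j + 2) * (∑' m : ℕ, PC (1/2) s i₀ m (j + 2)) := by
  rw [Summable.tsum_eq_zero_add (PC_summable hs hs1 hi₀ hφ0 hφ1 hroot (j + 1))]
  have h0 : PC (1/2) s i₀ 0 (j + 1) = (if j + 1 = i₀ then (1:ℝ) else 0) := by
    simp only [PC]
  have hstep : ∀ m : ℕ, PC (1/2) s i₀ (m + 1) (j + 1)
      = 1 / 2 * cC s i₀ j * PC (1/2) s i₀ m j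
        + 1 / 2 * cC s i₀ (j + 2) * PC (1/2) s i₀ m (j + 2) := by
    intro m; simp only [PC]; norm_num
  have hs1' : Summable (fun m : ℕ => 1 / 2 * cC s i₀ j * PC (1/2) s i₀ m j) :=
    (PC_summable hs hs1 hi₀ hφ0 hφ1 hroot j).mul_left _
  have hs2' : Summable (fun m : ℕ => 1 / 2 * cC s i₀ (j + 2) * PC (1/2) s i₀ m (j + 2)) :=
    (PC_summable hs hs1 hi₀ hφ0 hφ1 hroot (j + 2)).mul_left _
  rw [h0]
  have : (∑' m : ℕ, PC (1/2) s i₀ (m + 1) (j + 1))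
      = 1 / 2 * cC s i₀ j * (∑' m : ℕ, PC (1/2) s i₀ m j)
        + 1 / 2 * cC s i₀ (j + 2) * (∑' m : ℕ, PC (1/2) s i₀ m (j + 2)) := by
    calc (∑' m : ℕ, PC (1/2) s i₀ (m + 1) (j + 1))
        = ∑' m : ℕ, (1 / 2 * cC s i₀ j * PC (1/2) s i₀ m j
            + 1 / 2 * cC s i₀ (j + 2) * PC (1/2) s i₀ m (j + 2)) := tsum_congr hstep
      _ = (∑' m : ℕ, 1 / 2 * cC s i₀ j * PC (1/2) s i₀ m j)
            + ∑' m : ℕ, 1 / 2 * cC s i₀ (j + 2) * PC (1/2) s i₀ m (j + 2) :=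
          Summable.tsum_add hs1' hs2'
      _ = _ := by rw [tsum_mul_left, tsum_mul_left]
  rw [this]
  ring

lemma TW_eq_Wf (hs : 0 < s) (hs1 : s < 1) (hi₀ : 2 ≤ i₀) (hφ0 : 0 < φ₂) (hφ1 : φ₂ < 1)
    (hroot : φ₂ ^ 2 - (2 * ((i₀ : ℝ) / (1 - s) + 1 - (i₀ : ℝ))) * φ₂ + 1 = 0) (j : ℕ) :
    (∑' m : ℕ, PC (1/2) s i₀ m j) = Wf s φ₂ i₀ j := by
  have h1s : (0:ℝ) < 1 - s := by linarith
  set B : ℝ := 2 / (2 - φ₂) * (i₀ : ℝ) / (1 - s) with hBdef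
  set T : ℕ → ℝ := fun j => ∑' m : ℕ, PC (1/2) s i₀ m j with hTdef
  set D : ℕ → ℝ := fun j => Wf s φ₂ i₀ j - T j with hDdef
  set E : ℕ → ℝ := fun j => cC s i₀ j * D j with hEdef
  have hTle : ∀ j, T j ≤ Wf s φ₂ i₀ j := fun j =>
    Summable.tsum_le_of_sum_range_le (PC_summable hs hs1 hi₀ hφ0 hφ1 hroot j)
      (fun M => sum_PC_le hs hs1 hi₀ hφ0 hφ1 hroot M j)
  have hTnn : ∀ j, 0 ≤ T j := fun j => tsum_nonneg (fun m => PC_nonneg hs1 m j)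
  have hD0 : ∀ j, 0 ≤ D j := fun j => sub_nonneg.2 (hTle j)
  have hDB : ∀ j, D j ≤ B := by
    intro j
    have := Wf_le hs hs1 hi₀ hφ0 hφ1 j
    have := hTnn j
    simp only [hDdef, hBdef]
    linarith
  have hEnn : ∀ j, 0 ≤ E j := fun j =>
    mul_nonneg (cC_nonneg hs1 j) (hD0 j)
  have hED : ∀ j, E j ≤ D j := by
    intro j
    have h := mul_le_mul_of_nonneg_right (cC_le_one (i₀ := i₀) hs j) (hD0 j)
    simpa [hEdef] using h
  have hEB : ∀ j, E j ≤ B := fun j => le_trans (hED j) (hDB j)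
  have hEzero : E 0 = 0 := by simp [hEdef, cC_zero]
  have hDrec : ∀ j, 2 * D (j + 1) = E j + E (j + 2) := by
    intro j
    have h1 := Wf_eq_succ hs hs1 hi₀ hφ0 hφ1 hroot j
    have h2 := TW_succ hs hs1 hi₀ hφ0 hφ1 hroot j
    simp only [hDdef, hEdef, hTdef]
    linear_combination 2 * h1 - 2 * h2
  have hconv : ∀ j, 2 * E (j + 1) ≤ E j + E (j + 2) := by
    intro j
    have := hED (j + 1)
    have := hDrec j
    linarith
  have key1 : ∀ j, E j + E 1 ≤ E (j + 1) := by
    intro j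
    induction j with
    | zero => rw [hEzero]; linarith
    | succ n ih =>
      have := hconv n
      linarith
  have key2 : ∀ n : ℕ, (n : ℝ) * E 1 ≤ E n := by
    intro n
    induction n with
    | zero => simpa [hEzero] using le_of_eq rfl
    | succ n ih =>
      have := key1 n
      push_cast
      linarith
  have hE1 : E 1 = 0 := by
    by_contra hne
    have hpos : 0 < E 1 := (hEnn 1).lt_of_ne (Ne.symm hne)
    obtain ⟨n, hn⟩ := exists_nat_gt (B / E 1)
    have h1 : (n : ℝ) * E 1 ≤ B := le_trans (key2 n) (hEB n)
    have h2 : (n : ℝ) ≤ B / E 1 := (le_div_iff₀ hpos).2 h1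
    linarith
  have hEall : ∀ j, E j = 0 ∧ E (j + 1) = 0 := by
    intro j
    induction j with
    | zero => exact ⟨hEzero, hE1⟩
    | succ n ih =>
      refine ⟨ih.2, ?_⟩
      have hc : 0 < cC s i₀ (n + 1) := cC_pos hs1 (by omega)
      have hDn1 : D (n + 1) = 0 := by
        have h := ih.2
        simp only [hEdef] at h
        rcases mul_eq_zero.1 h with h' | h'
        · exact absurd h' (ne_of_gt hc)
        · exact h'
      have := hDrec n
      have := ih.1
      linarith
  have hDall : ∀ j, D j = 0 := by
    intro j
    cases j with
    | zero =>
      have h1 := Wf_eq_zero_case (φ₂ := φ₂) hs1 hi₀ hφ1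
      have h2 := TW_zero hs hs1 hi₀ hφ0 hφ1 hroot
      have hE1' : cC s i₀ 1 * D 1 = 0 := by
        have := (hEall 0).2
        simpa [hEdef] using this
      simp only [hDdef, hTdef]
      simp only [hDdef, hTdef] at hE1'
      linear_combination h1 - h2 + 1/2 * hE1'
    | succ n =>
      have hc : 0 < cC s i₀ (n + 1) := cC_pos hs1 (by omega)
      have h := (hEall n).2
      simp only [hEdef] at h
      rcases mul_eq_zero.1 h with h' | h'
      · exact absurd h' (ne_of_gt hc)
      · exact h'
  have := hDall j
  simp only [hDdef, hTdef] at this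
  linarith

end

/-- Theorem 3 of the paper, case `z = 1` and `ω = 1` (i.e. `p = q = 1/2`):
`W_j = ∑' m, P_C(m, j)` on the multiple function barriers. -/
theorem theorem3_case_z_eq_one_omega_eq_one (s : ℝ) (i₀ : ℕ)
    (hs : 0 < s) (hs1 : s < 1) (hi₀ : 2 ≤ i₀)
    (θ φ₂ : ℝ)
    (hθ : θ = 2 * ((i₀ : ℝ) / (1 - s) + 1 - (i₀ : ℝ)))
    (hφ₂ : φ₂ = (θ - Real.sqrt (θ ^ 2 - 4)) / 2) :
    (∀ j : ℕ, Summable (fun m : ℕ => PC (1 / 2) s i₀ m j)) ∧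
    (∑' m : ℕ, PC (1 / 2) s i₀ m 0) = 1 / (2 - φ₂) ∧
    (∑' m : ℕ, PC (1 / 2) s i₀ m i₀) = 2 * (i₀ : ℝ) / (2 - φ₂) ∧
    ∀ k : ℕ, 2 ≤ k →
      (∑' m : ℕ, PC (1 / 2) s i₀ m (k * i₀)) =
        2 * (i₀ : ℝ) * φ₂ ^ (k - 1) / ((1 - s) * (2 - φ₂)) := by
  have h1s : (0:ℝ) < 1 - s := by linarith
  have hI : (2:ℝ) ≤ (i₀ : ℝ) := by exact_mod_cast hi₀
  have hθ2 : 2 < θ := by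
    have hd : (i₀ : ℝ) < (i₀ : ℝ) / (1 - s) := by
      rw [lt_div_iff₀ h1s]
      nlinarith
    rw [hθ]; linarith
  have hd4 : (0:ℝ) ≤ θ ^ 2 - 4 := by nlinarith
  have hsq : Real.sqrt (θ ^ 2 - 4) ^ 2 = θ ^ 2 - 4 := Real.sq_sqrt hd4
  have hsnn : 0 ≤ Real.sqrt (θ ^ 2 - 4) := Real.sqrt_nonneg _
  have hsqlt : Real.sqrt (θ ^ 2 - 4) < θ := by
    nlinarith [hsq, hsnn]
  have hφ0 : 0 < φ₂ := by rw [hφ₂]; linarith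
  have hφ1 : φ₂ < 1 := by
    rw [hφ₂]
    have : θ - 2 < Real.sqrt (θ ^ 2 - 4) := by nlinarith [hsq, hsnn]
    linarith
  have hroot : φ₂ ^ 2 - (2 * ((i₀ : ℝ) / (1 - s) + 1 - (i₀ : ℝ))) * φ₂ + 1 = 0 := by
    rw [← hθ, hφ₂]
    linear_combination (1/4 : ℝ) * hsq
  have h2φ : (0:ℝ) < 2 - φ₂ := by linarith
  refine ⟨fun j => PC_summable hs hs1 hi₀ hφ0 hφ1 hroot j, ?_, ?_, ?_⟩
  · rw [TW_eq_Wf hs hs1 hi₀ hφ0 hφ1 hroot 0]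
    simp [Wf]
  · rw [TW_eq_Wf hs hs1 hi₀ hφ0 hφ1 hroot i₀]
    have hY : Yf φ₂ i₀ i₀ = 2 / (2 - φ₂) * (i₀ : ℝ) := Yf_le_branch le_rfl
    simp only [Wf, if_neg (by omega : ¬ i₀ = 0), hY, cC_i₀ hi₀]
    field_simp
  · intro k hk
    rw [TW_eq_Wf hs hs1 hi₀ hφ0 hφ1 hroot (k * i₀)]
    have hY : Yf φ₂ i₀ (k * i₀) = 2 / (2 - φ₂) * φ₂ ^ (k - 1) * (i₀ : ℝ) := by
      have h := Yf_block (φ₂ := φ₂) hi₀ (k := k) (r := 0) (by omega) (by omega)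
      simpa using h
    have hc : cC s i₀ (k * i₀) = 1 - s := cC_barrier hi₀ hk
    simp only [Wf, if_neg (by positivity : ¬ k * i₀ = 0), hY, hc]
    field_simp
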